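/- Let k ≥ 1 and t ≥ 0 be integers, let m = k(t+1) and n = m², and consider the scheduling instance with budget T = t+1 = √n/k. Set α = 1/|P_{t+1}(n)| (so that ∑_{I ⊆ [m]×[m]} y_I = 1) and define y_I = α for every I ⊆ [m]×[m] with |I| ≤ t+1 and y_I = 0 otherwise. Then there exists a real P₀ > 1 such that for every real P ≥ P₀ this y satisfies all conditions of the level-t Lasserre relaxation of LP(T): (i) ∑_I y_I = 1; (ii) ∑_I y_I Z_I Z_Iᵀ is positive semidefinite, where Z_I are (t+1)-zeta vectors; (iii) ∑_I g_0(x_I) y_I Z_I Z_Iᵀ is positive semidefinite and, for every ℓ ∈ [m], ∑_I g_ℓ(x_I) y_I Z_I Z_Iᵀ is positive semidefinite, where Z_I are t-zeta vectors and x_I is the 0/1 indicator vector of I. -/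

import Mathlib

open Finset Matrix

noncomputable def zetaVec (m d : ℕ) (I : Finset (Fin m × Fin m)) :
    {J : Finset (Fin m × Fin m) // J.card ≤ d} → ℝ :=
  fun J => if (J : Finset (Fin m × Fin m)) ⊆ I then 1 else 0

noncomputable def schedDemand (P : ℝ) (l : ℕ) : ℝ := ∑ j ∈ Finset.range (l + 1), P ^ j

noncomputable def schedG0 (m : ℕ) (T : ℝ) (I : Finset (Fin m × Fin m)) : ℝ :=
  T - I.card

noncomputable def schedG (m : ℕ) (P : ℝ) (l : Fin m) (I : Finset (Fin m × Fin m)) : ℝ :=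
  (∑ p ∈ I.filter (fun p => p.1 ≤ l), P ^ (p.1.1 + 1)) - schedDemand P l.1

/-! ### Auxiliary machinery -/

noncomputable def sC (m d : ℕ) (I : Finset (Fin m × Fin m))
    (c : {J : Finset (Fin m × Fin m) // J.card ≤ d} → ℝ) : ℝ :=
  zetaVec m d I ⬝ᵥ c

lemma dot_sum_smul {ι κ : Type*} [Fintype ι] [Fintype κ] (x : κ → ℝ) (a : ι → ℝ) (u : ι → κ → ℝ) :
    x ⬝ᵥ (∑ I : ι, a I • u I) = ∑ I : ι, a I * (u I ⬝ᵥ x) := by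
  simp only [dotProduct, Finset.sum_apply, Pi.smul_apply, smul_eq_mul, Finset.mul_sum]
  rw [Finset.sum_comm]
  exact Finset.sum_congr rfl fun I _ => Finset.sum_congr rfl fun J _ => by ring

lemma quad (m d : ℕ) (w : Finset (Fin m × Fin m) → ℝ)
    (h : ∀ c : {J : Finset (Fin m × Fin m) // J.card ≤ d} → ℝ,
      0 ≤ ∑ I : Finset (Fin m × Fin m), w I * (sC m d I c)^2) :
    Matrix.PosSemidef (∑ I : Finset (Fin m × Fin m),
      w I • Matrix.vecMulVec (zetaVec m d I) (zetaVec m d I)) := by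
  rw [Matrix.posSemidef_iff_dotProduct_mulVec]
  constructor
  · ext J J'
    simp only [Matrix.conjTranspose_apply, Matrix.sum_apply, Matrix.smul_apply,
      Matrix.vecMulVec_apply, smul_eq_mul, star_trivial]
    exact Finset.sum_congr rfl fun _ _ => by ring
  · intro x
    have hsum : (∑ I : Finset (Fin m × Fin m),
        w I • Matrix.vecMulVec (zetaVec m d I) (zetaVec m d I)) *ᵥ x
        = ∑ I : Finset (Fin m × Fin m), (w I * (zetaVec m d I ⬝ᵥ x)) • zetaVec m d I := by
      funext J
      simp only [Matrix.mulVec, dotProduct, Matrix.sum_apply, Finset.sum_apply,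
        Matrix.smul_apply, Matrix.vecMulVec_apply, smul_eq_mul, Pi.smul_apply,
        Finset.sum_mul, Finset.mul_sum]
      rw [Finset.sum_comm]
      exact Finset.sum_congr rfl fun _ _ => Finset.sum_congr rfl fun _ _ => by ring
    rw [hsum, star_trivial, dot_sum_smul]
    have : ∑ I : Finset (Fin m × Fin m), w I * (zetaVec m d I ⬝ᵥ x) * (zetaVec m d I ⬝ᵥ x)
        = ∑ I : Finset (Fin m × Fin m), w I * (sC m d I x)^2 :=
      Finset.sum_congr rfl fun I _ => by rw [sC, pow_two]; ring
    rw [this]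
    exact h x

lemma sC_eq_powerset (m d : ℕ) (I : Finset (Fin m × Fin m))
    (c : {J : Finset (Fin m × Fin m) // J.card ≤ d} → ℝ) :
    sC m d I c = ∑ J ∈ I.powerset, (if h : J.card ≤ d then c ⟨J, h⟩ else 0) := by
  have h1 : sC m d I c = ∑ J : {J : Finset (Fin m × Fin m) // J.card ≤ d},
      (fun (J : Finset (Fin m × Fin m)) =>
        if J ⊆ I then (if h : J.card ≤ d then c ⟨J, h⟩ else 0) else 0) ↑J := by
    unfold sC zetaVec dotProduct
    refine Finset.sum_congr rfl fun J _ => ?_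
    simp only [J.2, dif_pos, Subtype.coe_eta]
    split_ifs <;> simp
  rw [h1, ← Finset.sum_subtype (Finset.univ.filter (fun J : Finset (Fin m × Fin m) => J.card ≤ d))
    (fun J => by simp)
    (fun J : Finset (Fin m × Fin m) =>
      if J ⊆ I then (if h : J.card ≤ d then c ⟨J, h⟩ else 0) else 0)]
  rw [Finset.sum_filter]
  have h2 : I.powerset = Finset.univ.filter (fun J : Finset (Fin m × Fin m) => J ⊆ I) := by
    ext J; simp
  rw [h2, Finset.sum_filter]
  refine Finset.sum_congr rfl fun J _ => ?_
  by_cases hd : J.card ≤ d <;> by_cases hs : J ⊆ I <;> simp [hd, hs]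

lemma inj_aux {m t : ℕ} (htm : t + 1 ≤ m) (l : Fin m) (f : Finset (Fin m × Fin m) → ℝ)
    (h0 : ∀ J : Finset (Fin m × Fin m), t < J.card → f J = 0)
    (h1 : ∀ I : Finset (Fin m × Fin m), I.card ≤ t + 1 → (∃ p ∈ I, p.1 = l) →
      ∑ J ∈ I.powerset, f J = 0) :
    ∀ J, f J = 0 := by
  have hrow : ∀ J : Finset (Fin m × Fin m), J.card ≤ t →
      ∃ q : Fin m × Fin m, q.1 = l ∧ q ∉ J := by
    intro J hJ
    set R : Finset (Fin m × Fin m) := Finset.univ.image (fun j : Fin m => (l, j)) with hR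
    have hcardR : R.card = m := by
      rw [hR, Finset.card_image_of_injective _ (fun a b hab => by
        simpa using congrArg Prod.snd hab)]
      simp
    have hne : (R \ J).Nonempty := by
      rw [← Finset.card_pos]
      have := Finset.le_card_sdiff J R
      omega
    obtain ⟨q, hq⟩ := hne
    rw [Finset.mem_sdiff] at hq
    obtain ⟨hq1, hq2⟩ := hq
    rw [hR, Finset.mem_image] at hq1
    obtain ⟨j, _, hj⟩ := hq1
    exact ⟨q, by rw [← hj], hq2⟩
  have step2 : ∀ q : Fin m × Fin m, q.1 = l → ∀ J : Finset (Fin m × Fin m),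
      q ∉ J → J.card ≤ t → f J + f (insert q J) = 0 := by
    intro q hql J
    induction J using Finset.strongInduction with
    | _ J ih =>
      intro hq hc
      have hins : ∑ J' ∈ J.powerset, (f J' + f (insert q J')) = 0 := by
        have h := h1 (insert q J) (by rw [Finset.card_insert_of_notMem hq]; omega)
          ⟨q, Finset.mem_insert_self _ _, hql⟩
        rw [Finset.sum_powerset_insert hq] at h
        rw [Finset.sum_add_distrib]
        exact h
      rw [← Finset.add_sum_erase _ _ (Finset.mem_powerset_self J)] at hins
      have hz : ∑ J' ∈ J.powerset.erase J, (f J' + f (insert q J')) = 0 := by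
        apply Finset.sum_eq_zero
        intro J' hJ'
        obtain ⟨hne, hmem⟩ := Finset.mem_erase.mp hJ'
        have hsub : J' ⊆ J := Finset.mem_powerset.mp hmem
        exact ih J' (Finset.ssubset_iff_subset_ne.mpr ⟨hsub, hne⟩)
          (fun hqJ' => hq (hsub hqJ')) (le_trans (Finset.card_le_card hsub) hc)
      linarith
  have step3 : ∀ d : ℕ, ∀ J : Finset (Fin m × Fin m), t + 1 ≤ J.card + d → f J = 0 := by
    intro d
    induction d with
    | zero => intro J h; exact h0 J (by omega)
    | succ d ih =>
      intro J h
      by_cases hc : J.card ≤ t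
      · obtain ⟨q, hql, hqJ⟩ := hrow J hc
        have h2 := step2 q hql J hqJ hc
        have h3 := ih (insert q J) (by rw [Finset.card_insert_of_notMem hqJ]; omega)
        linarith
      · exact h0 J (by omega)
  exact fun J => step3 (t + 1) J (by omega)

noncomputable def sCL (m t : ℕ) (I : Finset (Fin m × Fin m)) :
    ({J : Finset (Fin m × Fin m) // J.card ≤ t} → ℝ) →ₗ[ℝ] ℝ where
  toFun c := sC m t I c
  map_add' c c' := dotProduct_add _ _ _
  map_smul' r c := by simp [sC, dotProduct_smul]

lemma key {k t m : ℕ} (hk : 1 ≤ k) (hm : m = k * (t + 1)) (l : Fin m) :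
    ∃ C : ℝ, 0 ≤ C ∧ ∀ c : {J : Finset (Fin m × Fin m) // J.card ≤ t} → ℝ,
      ∑ I ∈ Finset.univ.filter
          (fun I : Finset (Fin m × Fin m) => I.card ≤ t + 1 ∧ ¬ ∃ p ∈ I, p.1 = l),
        (sC m t I c) ^ 2
      ≤ C * ∑ I ∈ Finset.univ.filter
          (fun I : Finset (Fin m × Fin m) => I.card ≤ t + 1 ∧ ∃ p ∈ I, p.1 = l),
        (sC m t I c) ^ 2 := by
  have htm : t + 1 ≤ m := by
    rw [hm]; nlinarith
  set good : Finset (Finset (Fin m × Fin m)) :=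
    Finset.univ.filter (fun I : Finset (Fin m × Fin m) => I.card ≤ t + 1 ∧ ∃ p ∈ I, p.1 = l)
    with hgood
  set Φ : ({J : Finset (Fin m × Fin m) // J.card ≤ t} → ℝ) →ₗ[ℝ]
      (Finset (Fin m × Fin m) → ℝ) :=
    { toFun := fun c I => if I ∈ good then sC m t I c else 0
      map_add' := fun c c' => by
        funext I
        by_cases h : I ∈ good <;> simp [h, sC, dotProduct_add]
      map_smul' := fun r c => by
        funext I
        by_cases h : I ∈ good <;> simp [h, sC, dotProduct_smul] } with hΦ
  have hker : LinearMap.ker Φ = ⊥ := by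
    rw [LinearMap.ker_eq_bot']
    intro c hc
    have hgz : ∀ I ∈ good, sC m t I c = 0 := by
      intro I hI
      have := congrFun hc I
      simpa [hΦ, hI] using this
    have hf := inj_aux htm l
      (fun J => if h : J.card ≤ t then c ⟨J, h⟩ else 0)
      (fun J hJ => by
        show (if h : J.card ≤ t then c ⟨J, h⟩ else 0) = 0
        rw [dif_neg (by omega)])
      (fun I hI1 hI2 => by
        rw [← sC_eq_powerset]
        exact hgz I (by
          rw [hgood, Finset.mem_filter]
          exact ⟨Finset.mem_univ _, hI1, hI2⟩))
    funext J
    have := hf ↑J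
    simpa [J.2, Subtype.coe_eta] using this
  obtain ⟨Ψ, hΨ⟩ := Φ.exists_leftInverse_of_injective hker
  set a : Finset (Fin m × Fin m) → Finset (Fin m × Fin m) → ℝ :=
    fun I₀ I => (sCL m t I₀ ∘ₗ Ψ) (fun j => if I = j then 1 else 0) with ha
  have hrep : ∀ (I₀ : Finset (Fin m × Fin m))
      (c : {J : Finset (Fin m × Fin m) // J.card ≤ t} → ℝ),
      sC m t I₀ c = ∑ I ∈ good, sC m t I c * a I₀ I := by
    intro I₀ c
    have hc : c = Ψ (Φ c) := by
      have := congrFun (congrArg DFunLike.coe hΨ) c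
      simpa using this.symm
    have h1 : sC m t I₀ c = (sCL m t I₀ ∘ₗ Ψ) (Φ c) := by
      rw [LinearMap.comp_apply, ← hc]; rfl
    rw [h1, pi_eq_sum_univ (Φ c), map_sum]
    have h2 : ∀ I : Finset (Fin m × Fin m),
        (sCL m t I₀ ∘ₗ Ψ) ((Φ c) I • fun j => if I = j then (1:ℝ) else 0)
          = (Φ c) I * a I₀ I := by
      intro I
      rw [_root_.map_smul, ha, smul_eq_mul]
    rw [Finset.sum_congr rfl (fun I _ => h2 I)]
    rw [← Finset.sum_subset (Finset.subset_univ good)]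
    · refine Finset.sum_congr rfl fun I hI => ?_
      simp [hΦ, hI]
    · intro I _ hI
      simp [hΦ, hI]
  refine ⟨∑ I₀ ∈ Finset.univ.filter
      (fun I : Finset (Fin m × Fin m) => I.card ≤ t + 1 ∧ ¬ ∃ p ∈ I, p.1 = l),
      ∑ I ∈ good, (a I₀ I) ^ 2,
    Finset.sum_nonneg fun _ _ => Finset.sum_nonneg fun _ _ => sq_nonneg _, ?_⟩
  intro c
  rw [Finset.sum_mul]
  refine Finset.sum_le_sum fun I₀ _ => ?_
  rw [hrep I₀ c]
  calc (∑ I ∈ good, sC m t I c * a I₀ I) ^ 2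
      ≤ (∑ I ∈ good, (sC m t I c) ^ 2) * ∑ I ∈ good, (a I₀ I) ^ 2 :=
        Finset.sum_mul_sq_le_sq_mul_sq _ _ _
    _ = (∑ I ∈ good, (a I₀ I) ^ 2) * ∑ I ∈ good, (sC m t I c) ^ 2 := by ring

theorem stmt_1 (k t m : ℕ) (hk : 1 ≤ k) (hm : m = k * (t + 1)) :
    ∃ P0 : ℝ, 1 < P0 ∧ ∀ P : ℝ, P0 ≤ P →
      let T : ℝ := ((t + 1 : ℕ) : ℝ)
      let α : ℝ := ((Fintype.card {J : Finset (Fin m × Fin m) // J.card ≤ t + 1} : ℝ))⁻¹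
      let y : Finset (Fin m × Fin m) → ℝ := fun I => if I.card ≤ t + 1 then α else 0
      (∑ I : Finset (Fin m × Fin m), y I = 1) ∧
      Matrix.PosSemidef
        (∑ I : Finset (Fin m × Fin m),
          y I • Matrix.vecMulVec (zetaVec m (t + 1) I) (zetaVec m (t + 1) I)) ∧
      Matrix.PosSemidef
        (∑ I : Finset (Fin m × Fin m),
          (schedG0 m T I * y I) • Matrix.vecMulVec (zetaVec m t I) (zetaVec m t I)) ∧
      ∀ l : Fin m, Matrix.PosSemidef
        (∑ I : Finset (Fin m × Fin m),
          (schedG m P l I * y I) • Matrix.vecMulVec (zetaVec m t I) (zetaVec m t I)) := by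
  choose C hC0 hCkey using fun l : Fin m => key hk hm l
  refine ⟨2 + ∑ l : Fin m, (m * (1 + C l)), ?_, ?_⟩
  · have : 0 ≤ ∑ l : Fin m, ((m : ℝ) * (1 + C l)) :=
      Finset.sum_nonneg fun l _ => mul_nonneg (Nat.cast_nonneg m) (by linarith [hC0 l])
    linarith
  intro P hP
  intro T α y
  have hT : T = ((t + 1 : ℕ) : ℝ) := rfl
  have hy : ∀ I : Finset (Fin m × Fin m), y I = if I.card ≤ t + 1 then α else 0 :=
    fun I => rfl
  have hα : α = ((Fintype.card {J : Finset (Fin m × Fin m) // J.card ≤ t + 1} : ℝ))⁻¹ := rfl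
  have hα0 : 0 ≤ α := by rw [hα]; positivity
  have hsumnn : 0 ≤ ∑ l : Fin m, ((m : ℝ) * (1 + C l)) :=
    Finset.sum_nonneg fun l _ => mul_nonneg (Nat.cast_nonneg m) (by linarith [hC0 l])
  have hP1 : (1 : ℝ) ≤ P := by linarith
  have hP0' : (0 : ℝ) ≤ P := by linarith
  refine ⟨?_, ?_, ?_, ?_⟩
  · -- (i) total mass one
    have hN : (0 : ℕ) < Fintype.card {J : Finset (Fin m × Fin m) // J.card ≤ t + 1} :=
      @Fintype.card_pos _ _ ⟨⟨(∅ : Finset (Fin m × Fin m)), by simp⟩⟩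
    calc ∑ I : Finset (Fin m × Fin m), y I
        = ∑ I ∈ Finset.univ.filter (fun I : Finset (Fin m × Fin m) => I.card ≤ t + 1), α := by
          rw [Finset.sum_filter]
      _ = ((Finset.univ.filter (fun I : Finset (Fin m × Fin m) => I.card ≤ t + 1)).card : ℝ) * α := by
          rw [Finset.sum_const, nsmul_eq_mul]
      _ = 1 := by
          rw [hα, ← Fintype.card_subtype]
          exact mul_inv_cancel₀ (by exact_mod_cast hN.ne')
  · -- (ii)
    apply quad
    intro c
    refine Finset.sum_nonneg fun I _ => mul_nonneg ?_ (sq_nonneg _)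
    rw [hy]
    split_ifs
    · exact hα0
    · exact le_refl 0
  · -- (iii) g0
    apply quad
    intro c
    refine Finset.sum_nonneg fun I _ => mul_nonneg ?_ (sq_nonneg _)
    rw [hy]
    split_ifs with h
    · refine mul_nonneg ?_ hα0
      rw [schedG0, hT]
      have : (I.card : ℝ) ≤ ((t + 1 : ℕ) : ℝ) := by exact_mod_cast h
      linarith
    · rw [mul_zero]
  · -- (iv) demand constraints
    intro l
    apply quad
    intro c
    set D := schedDemand P l.1 with hDdef
    have hD0 : 0 ≤ D := Finset.sum_nonneg fun j _ => pow_nonneg hP0' j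
    have hDle : D ≤ (m : ℝ) * P ^ l.1 := by
      have h1 : D ≤ (Finset.range (l.1 + 1)).card • P ^ l.1 :=
        Finset.sum_le_card_nsmul _ _ _ (fun j hj =>
          pow_le_pow_right₀ hP1 (by simpa using Nat.lt_succ_iff.mp (Finset.mem_range.mp hj)))
      rw [Finset.card_range, nsmul_eq_mul] at h1
      have h2 : ((l.1 + 1 : ℕ) : ℝ) ≤ (m : ℝ) := by exact_mod_cast Nat.succ_le_of_lt l.2
      nlinarith [pow_nonneg hP0' l.1]
    have hml : (m : ℝ) * (1 + C l) ≤ P := by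
      have h3 : (m : ℝ) * (1 + C l) ≤ ∑ l' : Fin m, ((m : ℝ) * (1 + C l')) :=
        Finset.single_le_sum (f := fun l' : Fin m => (m : ℝ) * (1 + C l')) (fun l' _ =>
          mul_nonneg (Nat.cast_nonneg m) (by linarith [hC0 l'])) (Finset.mem_univ l)
      linarith
    have hGood : ∀ I : Finset (Fin m × Fin m), (∃ p ∈ I, p.1 = l) →
        P ^ (l.1 + 1) - D ≤ schedG m P l I := by
      intro I ⟨p, hp, hpl⟩
      have hmem : p ∈ I.filter (fun p => p.1 ≤ l) :=
        Finset.mem_filter.mpr ⟨hp, le_of_eq hpl⟩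
      have hle : P ^ (p.1.1 + 1) ≤ ∑ q ∈ I.filter (fun q => q.1 ≤ l), P ^ (q.1.1 + 1) :=
        Finset.single_le_sum (f := fun q : Fin m × Fin m => P ^ (q.1.1 + 1))
          (fun q _ => pow_nonneg hP0' _) hmem
      have hpe : p.1.1 = l.1 := by rw [hpl]
      rw [schedG, ← hDdef]
      rw [hpe] at hle
      linarith
    have hBad : ∀ I : Finset (Fin m × Fin m), -D ≤ schedG m P l I := by
      intro I
      rw [schedG, ← hDdef]
      have : (0:ℝ) ≤ ∑ q ∈ I.filter (fun q => q.1 ≤ l), P ^ (q.1.1 + 1) :=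
        Finset.sum_nonneg fun q _ => pow_nonneg hP0' _
      linarith
    -- abbreviations
    set S := Finset.univ.filter (fun I : Finset (Fin m × Fin m) => I.card ≤ t + 1) with hS
    have hA : ∑ I : Finset (Fin m × Fin m), (schedG m P l I * y I) * (sC m t I c) ^ 2
        = ∑ I ∈ S, (schedG m P l I * α) * (sC m t I c) ^ 2 := by
      rw [hS, Finset.sum_filter]
      refine Finset.sum_congr rfl fun I _ => ?_
      rw [hy]
      split_ifs
      · rfl
      · rw [mul_zero, zero_mul]
    have hsplit := Finset.sum_filter_add_sum_filter_not S
      (fun I : Finset (Fin m × Fin m) => ∃ p ∈ I, p.1 = l)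
      (fun I => (schedG m P l I * α) * (sC m t I c) ^ 2)
    have hGfilt : S.filter (fun I : Finset (Fin m × Fin m) => ∃ p ∈ I, p.1 = l)
        = Finset.univ.filter
          (fun I : Finset (Fin m × Fin m) => I.card ≤ t + 1 ∧ ∃ p ∈ I, p.1 = l) := by
      rw [hS, Finset.filter_filter]
    have hBfilt : S.filter (fun I : Finset (Fin m × Fin m) => ¬ ∃ p ∈ I, p.1 = l)
        = Finset.univ.filter
          (fun I : Finset (Fin m × Fin m) => I.card ≤ t + 1 ∧ ¬ ∃ p ∈ I, p.1 = l) := by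
      rw [hS, Finset.filter_filter]
    set Gs := ∑ I ∈ Finset.univ.filter
        (fun I : Finset (Fin m × Fin m) => I.card ≤ t + 1 ∧ ∃ p ∈ I, p.1 = l),
      (sC m t I c) ^ 2 with hGs
    set Bs := ∑ I ∈ Finset.univ.filter
        (fun I : Finset (Fin m × Fin m) => I.card ≤ t + 1 ∧ ¬ ∃ p ∈ I, p.1 = l),
      (sC m t I c) ^ 2 with hBs
    have hGs0 : 0 ≤ Gs := Finset.sum_nonneg fun _ _ => sq_nonneg _
    have hBs0 : 0 ≤ Bs := Finset.sum_nonneg fun _ _ => sq_nonneg _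
    have hGlow : (P ^ (l.1 + 1) - D) * α * Gs
        ≤ ∑ I ∈ S.filter (fun I : Finset (Fin m × Fin m) => ∃ p ∈ I, p.1 = l),
            (schedG m P l I * α) * (sC m t I c) ^ 2 := by
      rw [hGfilt, hGs, Finset.mul_sum]
      refine Finset.sum_le_sum fun I hI => ?_
      have hex := (Finset.mem_filter.mp hI).2.2
      refine mul_le_mul_of_nonneg_right ?_ (sq_nonneg _)
      exact mul_le_mul_of_nonneg_right (hGood I hex) hα0
    have hBlow : (-D) * α * Bs
        ≤ ∑ I ∈ S.filter (fun I : Finset (Fin m × Fin m) => ¬ ∃ p ∈ I, p.1 = l),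
            (schedG m P l I * α) * (sC m t I c) ^ 2 := by
      rw [hBfilt, hBs, Finset.mul_sum]
      refine Finset.sum_le_sum fun I hI => ?_
      refine mul_le_mul_of_nonneg_right ?_ (sq_nonneg _)
      exact mul_le_mul_of_nonneg_right (hBad I) hα0
    have hkey := hCkey l c
    rw [← hBs, ← hGs] at hkey
    -- final arithmetic
    have hDC : D * (1 + C l) ≤ P ^ (l.1 + 1) := by
      have h4 : D * (1 + C l) ≤ ((m : ℝ) * P ^ l.1) * (1 + C l) :=
        mul_le_mul_of_nonneg_right hDle (by linarith [hC0 l])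
      have h5 : ((m : ℝ) * (1 + C l)) * P ^ l.1 ≤ P * P ^ l.1 :=
        mul_le_mul_of_nonneg_right hml (pow_nonneg hP0' l.1)
      rw [pow_succ']
      nlinarith
    have hBC : (-D) * α * (C l * Gs) ≤ (-D) * α * Bs := by
      apply mul_le_mul_of_nonpos_left hkey
      have : 0 ≤ D * α := mul_nonneg hD0 hα0
      linarith
    have hfinal : 0 ≤ (P ^ (l.1 + 1) - D) * α * Gs + (-D) * α * (C l * Gs) := by
      have heq : (P ^ (l.1 + 1) - D) * α * Gs + (-D) * α * (C l * Gs)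
          = (P ^ (l.1 + 1) - D * (1 + C l)) * (α * Gs) := by ring
      rw [heq]
      exact mul_nonneg (by linarith) (mul_nonneg hα0 hGs0)
    rw [hA, ← hsplit]
    linarith
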